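/- With the recursive admittances Yₙ of the real-variable fractal ladder defined by Y₁(s) = 1/b + 1/(a·s) and Yₙ₊₁(s) = 1/b + 1/(a·s + 1/(σ·Yₙ(σ²s))) for a, b, σ, s > 0, the sequence (Yₙ(s))ₙ is monotone decreasing in n for each fixed s > 0. -/

import Mathlib

theorem ladder_admittance_antitone (a b σ : ℝ) (ha : 0 < a) (hb : 0 < b) (hσ : 0 < σ)
    (Y : ℕ → ℝ → ℝ)
    (hY1 : ∀ s : ℝ, Y 1 s = 1 / b + 1 / (a * s))
    (hYrec : ∀ n ≥ 1, ∀ s : ℝ, Y (n + 1) s = 1 / b + 1 / (a * s + 1 / (σ * Y n (σ ^ 2 * s)))) :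
    ∀ s : ℝ, 0 < s → ∀ n ≥ 1, Y (n + 1) s ≤ Y n s := by
  have hpos : ∀ n, 1 ≤ n → ∀ s : ℝ, 0 < s → 0 < Y n s := by
    intro n
    induction n with
    | zero => intro h; omega
    | succ m ih =>
      intro _ s hs
      by_cases hm : 1 ≤ m
      · rw [hYrec m hm]
        have h1 := ih hm (σ ^ 2 * s) (by positivity)
        positivity
      · have hm0 : m = 0 := by omega
        subst hm0
        rw [hY1]
        positivity
  have main : ∀ n, 1 ≤ n → ∀ s : ℝ, 0 < s → Y (n + 1) s ≤ Y n s := by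
    intro n
    induction n with
    | zero => intro h; omega
    | succ m ih =>
      intro _ s hs
      by_cases hm : 1 ≤ m
      · rw [hYrec (m + 1) (by omega) s, hYrec m hm s]
        have ht : (0 : ℝ) < σ ^ 2 * s := by positivity
        have h1 := hpos m hm _ ht
        have h2 := hpos (m + 1) (by omega) _ ht
        have hmono := ih hm (σ ^ 2 * s) ht
        have hd : 0 < a * s + 1 / (σ * Y m (σ ^ 2 * s)) := by positivity
        refine add_le_add_right (one_div_le_one_div_of_le hd ?_) _
        refine add_le_add_right (one_div_le_one_div_of_le (by positivity) ?_) _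
        exact mul_le_mul_of_nonneg_left hmono hσ.le
      · have hm0 : m = 0 := by omega
        subst hm0
        rw [hYrec 1 le_rfl s, hY1 s]
        have h1 := hpos 1 le_rfl (σ ^ 2 * s) (by positivity)
        have has : 0 < a * s := by positivity
        refine add_le_add_right (one_div_le_one_div_of_le has ?_) _
        exact le_add_of_nonneg_right (by positivity)
  intro s hs n hn
  exact main n hn s hs
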